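/- The identity process I ≝ rec X. Σ_{a ∈ Act₊} (l(a) ∪ r(a)‾).X is a two-sided unit for both applications up to failures equivalence: for every process P, ⟨P | I⟩ ≈_f P and (I | P⟩ ≈_f P. -/

import Mathlib

set_option linter.unnecessarySeqFocus false

/-! # CCS with simultaneous actions (Abramsky, "Process Realizability") -/

/-- Labels: names (`inl`) and co-names (`inr`). -/
abbrev Label : Type := ℕ ⊕ ℕ

/-- The involution `λ ↦ λ̄` exchanging names and co-names. -/
def Label.bar : Label → Label
  | .inl n => .inr n
  | .inr n => .inl n

/-- Actions: finite sets of labels, performed simultaneously.  `τ = ∅`. -/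
abbrev Act : Type := Finset Label

/-- A renaming: a partial injective function on labels preserving the involution. -/
structure Renaming where
  toFun : Label → Option Label
  inj : ∀ ⦃x y z : Label⦄, toFun x = some z → toFun y = some z → x = y
  bar : ∀ x : Label, toFun (Label.bar x) = (toFun x).map Label.bar

/-- The pointwise extension of a renaming to actions. -/
def Renaming.onAction (f : Renaming) (a : Act) : Act :=
  a.filterMap f.toFun (fun _ _ _ hx hy => f.inj (Option.mem_def.mp hx) (Option.mem_def.mp hy))

/-- Guarded process terms of CCS with simultaneous actions:
prefix, countably-indexed guarded sums (all guards non-`τ`), parallel composition,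
restriction, renaming, process variables (de Bruijn) and recursion. -/
inductive Proc : Type where
  | pre (a : Act) (P : Proc)
  | sum (I : Set ℕ) (act : ℕ → Act) (cont : ℕ → Proc) (hg : ∀ n ∈ I, (act n).Nonempty)
  | par (P Q : Proc)
  | restrict (P : Proc) (L : Set Label)
  | rename (P : Proc) (f : Renaming)
  | var (n : ℕ)
  | fix (P : Proc)

/-- The inactive process `0` (the empty sum). -/
def Proc.nil : Proc := .sum ∅ (fun _ => ∅) (fun _ => .var 0) (by simp)

/-- Substitution of a process for the variable with de Bruijn index `d`. -/
def Proc.subst (R : Proc) : ℕ → Proc → Proc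
  | d, .pre a P => .pre a (Proc.subst R d P)
  | d, .sum I act cont hg => .sum I act (fun n => Proc.subst R d (cont n)) hg
  | d, .par P Q => .par (Proc.subst R d P) (Proc.subst R d Q)
  | d, .restrict P L => .restrict (Proc.subst R d P) L
  | d, .rename P f => .rename (Proc.subst R d P) f
  | d, .var n => if n = d then R else .var n
  | d, .fix P => .fix (Proc.subst R (d + 1) P)

/-- The labelled transition relation, with the generalized synchronization rule
for simultaneous (compound) actions. -/
inductive Step : Proc → Act → Proc → Prop where
  | pre {a P} : Step (.pre a P) a P
  | sum {I act cont hg} (j : ℕ) (hj : j ∈ I) : Step (.sum I act cont hg) (act j) (cont j)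
  | restrict {P a Q L} : Step P a Q → (∀ l ∈ a, l ∉ L ∧ Label.bar l ∉ L) →
      Step (.restrict P L) a (.restrict Q L)
  | rename {P a Q} {f : Renaming} : Step P a Q → (∀ l ∈ a, (f.toFun l).isSome) →
      Step (.rename P f) (f.onAction a) (.rename Q f)
  | fix {P a Q} : Step (Proc.subst (.fix P) 0 P) a Q → Step (.fix P) a Q
  | parL {P a P' Q} : Step P a P' → Step (.par P Q) a (.par P' Q)
  | parR {P Q a Q'} : Step Q a Q' → Step (.par P Q) a (.par P Q')
  | sync {P Q P' Q' a b c} : Step P (a ∪ b) P' → Step Q (b.image Label.bar ∪ c) Q' →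
      Disjoint a b → Disjoint (b.image Label.bar) c → Disjoint a c →
      Step (.par P Q) (a ∪ c) (.par P' Q')

/-- Zero or more silent (`τ`) transitions. -/
def TauStar : Proc → Proc → Prop :=
  Relation.ReflTransGen (fun P Q => Step P ∅ Q)

/-- Observable transition `P ⟹a Q`: `τ* a τ*`. -/
def Obs (P : Proc) (a : Act) (Q : Proc) : Prop :=
  ∃ P₁ P₂, TauStar P P₁ ∧ Step P₁ a P₂ ∧ TauStar P₂ Q

/-- Observable transitions along a string of (non-`τ`) actions. -/
inductive ObsSeq : Proc → List Act → Proc → Prop where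
  | nil {P Q} : TauStar P Q → ObsSeq P [] Q
  | cons {P a Q s R} : Obs P a Q → ObsSeq Q s R → ObsSeq P (a :: s) R

/-- The failures of a process: pairs `(s, X)` with `s` a string of nonempty actions and
`X` a set of nonempty actions such that `P ⟹s Q` for some `Q` refusing every action of `X`. -/
def failures (P : Proc) : Set (List Act × Set Act) :=
  { sX | (∀ a ∈ sX.1, a.Nonempty) ∧ (∀ a ∈ sX.2, a.Nonempty) ∧
      ∃ Q, ObsSeq P sX.1 Q ∧ ∀ a ∈ sX.2, ¬∃ R, Obs Q a R }

/-- Failures equivalence. -/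
def FailEq (P Q : Proc) : Prop := failures P = failures Q

/-- Weak simulations (with respect to the observable transitions). -/
def IsWeakSim (R : Proc → Proc → Prop) : Prop :=
  ∀ ⦃P Q⦄, R P Q →
    (∀ P', TauStar P P' → ∃ Q', TauStar Q Q' ∧ R P' Q') ∧
    (∀ a P', (a : Act).Nonempty → Obs P a P' → ∃ Q', Obs Q a Q' ∧ R P' Q')

/-- Weak bisimilarity. -/
def WeakBisim (P Q : Proc) : Prop :=
  ∃ R : Proc → Proc → Prop, IsWeakSim R ∧ IsWeakSim (fun x y => R y x) ∧ R P Q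
/-! ## The split name space and the basic combinators -/

/-- Build a bar-preserving partial injective renaming from a partial injective map on names. -/
def Renaming.ofNameFun (f : ℕ → Option ℕ)
    (hf : ∀ ⦃x y z : ℕ⦄, f x = some z → f y = some z → x = y) : Renaming where
  toFun := fun l =>
    match l with
    | .inl n => (f n).map .inl
    | .inr n => (f n).map .inr
  inj := by
    rintro (x | x) (y | y) (z | z) hx hy <;>
      simp only [Option.map_eq_some_iff] at hx hy <;>
      obtain ⟨a, ha, ha'⟩ := hx <;> obtain ⟨b, hb, hb'⟩ := hy <;>
        solve
          | (cases ha'; cases hb'; exact congrArg _ (hf ha hb))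
          | (cases hb')
          | (cases ha')
  bar := by
    rintro (n | n) <;> cases hf : f n <;> simp [Label.bar, hf]

/-- The underlying name of a label. -/
def Label.name : Label → ℕ := Sum.elim id id

/-- The injection `l` of the name space onto its "left" half (even names). -/
def lRen : Renaming := Renaming.ofNameFun (fun n => some (2 * n)) (by intro x y z hx hy; simp only [Option.some.injEq] at hx hy; omega)

/-- The injection `r` of the name space onto its "right" half (odd names). -/
def rRen : Renaming := Renaming.ofNameFun (fun n => some (2 * n + 1)) (by intro x y z hx hy; simp only [Option.some.injEq] at hx hy; omega)

/-- The partial inverse `l⁻¹` of `l`. -/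
def lInv : Renaming :=
  Renaming.ofNameFun (fun n => if n % 2 = 0 then some (n / 2) else none)
    (by intro x y z hx hy; try dsimp only at hx hy
        split at hx <;> split at hy <;> simp_all <;> omega)

/-- The partial inverse `r⁻¹` of `r`. -/
def rInv : Renaming :=
  Renaming.ofNameFun (fun n => if n % 2 = 1 then some (n / 2) else none)
    (by intro x y z hx hy; try dsimp only at hx hy
        split at hx <;> split at hy <;> simp_all <;> omega)

/-- The left half `ℒ_l` of the label space. -/
def LabL : Set Label := {x | x.name % 2 = 0}

/-- The right half `ℒ_r` of the label space. -/
def LabR : Set Label := {x | x.name % 2 = 1}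

/-- Tensor product: disjoint (non-communicating) parallel composition `P[l] | Q[r]`. -/
def tensor (P Q : Proc) : Proc := .par (P.rename lRen) (Q.rename rRen)

/-- Left (forwards) application `⟨Q | P⟩ = ((Q[l] | P) ∖ ℒ_l)[r⁻¹]`. -/
def lapp (Q P : Proc) : Proc := ((Proc.par (Q.rename lRen) P).restrict LabL).rename rInv

/-- Right (reverse) application `(P | R⟩ = ((P | R[r]) ∖ ℒ_r)[l⁻¹]`. -/
def rapp (P R : Proc) : Proc := ((Proc.par P (R.rename rRen)).restrict LabR).rename lInv

/-! ### The three-fold decomposition `𝒩 = 𝒩₁ ∪̇ 𝒩₂ ∪̇ 𝒩₃` and composition -/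

/-- `φ₁₂ : 𝒩 ≅ 𝒩₁ ∪̇ 𝒩₂` (`𝒩ᵢ` = names `≡ i - 1 (mod 3)`), carrying `𝒩_l` onto `𝒩₁`, `𝒩_r` onto `𝒩₂`. -/
def phi12 : Renaming :=
  Renaming.ofNameFun (fun n => some (if n % 2 = 0 then 3 * (n / 2) else 3 * (n / 2) + 1))
    (by intro x y z hx hy; try dsimp only at hx hy
        simp only [Option.some.injEq] at hx hy
        split at hx <;> split at hy <;> omega)

/-- `φ₂₃ : 𝒩 ≅ 𝒩₂ ∪̇ 𝒩₃`, carrying `𝒩_l` onto `𝒩₂`, `𝒩_r` onto `𝒩₃`. -/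
def phi23 : Renaming :=
  Renaming.ofNameFun (fun n => some (if n % 2 = 0 then 3 * (n / 2) + 1 else 3 * (n / 2) + 2))
    (by intro x y z hx hy; try dsimp only at hx hy
        simp only [Option.some.injEq] at hx hy
        split at hx <;> split at hy <;> omega)

/-- The partial inverse `φ₁₃⁻¹` of `φ₁₃ : 𝒩 ≅ 𝒩₁ ∪̇ 𝒩₃`. -/
def phi13Inv : Renaming :=
  Renaming.ofNameFun
    (fun n => if n % 3 = 0 then some (2 * (n / 3)) else if n % 3 = 2 then some (2 * (n / 3) + 1) else none)
    (by intro x y z hx hy; try dsimp only at hx hy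
        split at hx <;> split at hy <;> simp_all <;> omega)

/-- The middle part `𝒩₂` of the label space (as a set of labels). -/
def Lab2 : Set Label := {x | x.name % 3 = 1}

/-- Composition `P ; Q = ((P[φ₁₂] | Q[φ₂₃]) ∖ 𝒩₂)[φ₁₃⁻¹]`. -/
def comp (P Q : Proc) : Proc :=
  ((Proc.par (P.rename phi12) (Q.rename phi23)).restrict Lab2).rename phi13Inv

/-! ### The identity (wire) process -/

/-- The identity process `I = rec X. Σ_{a ∈ Act₊} (l(a) ∪ r(a)‾).X`. -/
noncomputable def Iproc : Proc :=
  .fix (.sum {n | ∃ a : Act, (Encodable.decode n : Option Act) = some a ∧ a.Nonempty}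
    (fun n =>
      match (Encodable.decode n : Option Act) with
      | some a => lRen.onAction a ∪ (rRen.onAction a).image Label.bar
      | none => {Sum.inl 0})
    (fun _ => .var 0)
    (by rintro n ⟨a, ha, hne⟩
        simp only [ha]
        obtain ⟨x, hx⟩ := hne
        refine Finset.Nonempty.mono Finset.subset_union_left ⟨(Sum.map (2 * ·) (2 * ·)) x, ?_⟩
        simp only [Renaming.onAction, Finset.mem_filterMap]
        exact ⟨x, hx, by cases x <;> rfl⟩))

/-! ## Guarded choice combinators, the additive pairing and injections, `!P`, divergence -/

/-- Binary guarded sum `a.P + b.Q` (guards must be non-`τ`). -/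
def gsum2 (a : Act) (P : Proc) (b : Act) (Q : Proc) (ha : a.Nonempty) (hb : b.Nonempty) : Proc :=
  .sum {0, 1} (fun n => if n = 0 then a else b) (fun n => if n = 0 then P else Q)
    (by intro n _; (try dsimp only); split <;> assumption)

/-- Ternary guarded sum `a.P + b.Q + c.R`. -/
def gsum3 (a : Act) (P : Proc) (b : Act) (Q : Proc) (c : Act) (R : Proc)
    (ha : a.Nonempty) (hb : b.Nonempty) (hc : c.Nonempty) : Proc :=
  .sum {0, 1, 2} (fun n => if n = 0 then a else if n = 1 then b else c)
    (fun n => if n = 0 then P else if n = 1 then Q else R)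
    (by intro n _; (try dsimp only); split <;> [skip; split] <;> assumption)

/-- The distinguished names: `α = 0`, `β = 1`, `ω = 2`, `δ = 3`, `γ = 4`, `σ = 5`. -/
def αAct : Act := {Sum.inl 0}
def βAct : Act := {Sum.inl 1}
def αBar : Act := {Sum.inr 0}
def βBar : Act := {Sum.inr 1}
def ωAct : Act := {Sum.inl 2}
def δBar : Act := {Sum.inr 3}
def γBar : Act := {Sum.inr 4}

/-- The additive pairing `⟨P, Q⟩ = r(α).P + r(β).Q`  (`r(α) = 1`, `r(β) = 3`). -/
def pairR (P Q : Proc) : Proc :=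
  gsum2 {Sum.inl 1} P {Sum.inl 3} Q (Finset.singleton_nonempty _) (Finset.singleton_nonempty _)

/-- The plain additive pairing `α.P + β.Q` used in the realizability clauses for `&`. -/
def pairProc (P Q : Proc) : Proc :=
  gsum2 αAct P βAct Q (Finset.singleton_nonempty _) (Finset.singleton_nonempty _)

/-- The left injection `l(P) = l(α)‾.P`  (`l(α) = 0`). -/
def injl (P : Proc) : Proc := .pre {Sum.inr 0} P

/-- The right injection `r(Q) = r(β)‾.Q`  (`r(β) = 3`). -/
def injr (Q : Proc) : Proc := .pre {Sum.inr 3} Q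

/-- The exponential combinator `!P = rec X.(ω.0 + δ.P + γ.(X[l] | X[r]))`. -/
def bangProc (P : Proc) : Proc :=
  .fix (gsum3 ωAct Proc.nil ({Sum.inl 3} : Act) P ({Sum.inl 4} : Act)
    (.par (Proc.rename (.var 0) lRen) (Proc.rename (.var 0) rRen))
    (Finset.singleton_nonempty _) (Finset.singleton_nonempty _) (Finset.singleton_nonempty _))

/-- `P` diverges if there is an infinite sequence of `τ`-transitions from `P`. -/
def Diverges (P : Proc) : Prop :=
  ∃ f : ℕ → Proc, f 0 = P ∧ ∀ n, Step (f n) ∅ (f (n + 1))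

/-- `P ⊥ Q`: closing the system, `P` and `Q` interacting with each other yield no divergence. -/
def Orth (P Q : Proc) : Prop := ¬ Diverges ((Proc.par P Q).restrict Set.univ)


/-! ## Auxiliary lemmas for the proof -/

lemma bar_bar (x : Label) : x.bar.bar = x := by cases x <;> rfl

lemma name_bar (x : Label) : x.bar.name = x.name := by cases x <;> rfl

lemma mem_onAction {f : Renaming} {a : Act} {y : Label} :
    y ∈ f.onAction a ↔ ∃ x ∈ a, f.toFun x = some y := by
  simp [Renaming.onAction, Finset.mem_filterMap]

lemma onAction_empty (f : Renaming) : f.onAction ∅ = ∅ := by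
  simp [Renaming.onAction]

lemma image_bar_onAction (f : Renaming) (a : Act) :
    (f.onAction a).image Label.bar = f.onAction (a.image Label.bar) := by
  ext y
  simp only [Finset.mem_image, mem_onAction]
  constructor
  · rintro ⟨z, ⟨x, hx, hz⟩, rfl⟩
    refine ⟨x.bar, ⟨x, hx, rfl⟩, ?_⟩
    rw [f.bar, hz]; rfl
  · rintro ⟨w, ⟨x, hx, rfl⟩, hw⟩
    rw [f.bar] at hw
    cases hz : f.toFun x with
    | none => rw [hz] at hw; cases hw
    | some z => rw [hz] at hw; cases hw; exact ⟨z, ⟨x, hx, hz⟩, rfl⟩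

lemma image_bar_bar (a : Act) : (a.image Label.bar).image Label.bar = a := by
  ext x
  simp only [Finset.mem_image]
  constructor
  · rintro ⟨y, ⟨z, hz, rfl⟩, rfl⟩; rwa [bar_bar]
  · intro hx; exact ⟨x.bar, ⟨x, hx, rfl⟩, bar_bar x⟩

lemma name_map (g : ℕ → ℕ) (x : Label) : Label.name (x.map g g) = g x.name := by
  cases x <;> rfl

lemma lRen_toFun (x : Label) : lRen.toFun x = some (x.map (2 * ·) (2 * ·)) := by
  cases x <;> rfl

lemma rRen_toFun (x : Label) : rRen.toFun x = some (x.map (2 * · + 1) (2 * · + 1)) := by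
  cases x <;> rfl

lemma lInv_lRen_toFun (x : Label) : lInv.toFun (x.map (2 * ·) (2 * ·)) = some x := by
  cases x with
  | inl n =>
      have h1 : (2 * n) % 2 = 0 := by omega
      have h2 : (2 * n) / 2 = n := by omega
      simp [lInv, Renaming.ofNameFun, Sum.map, h1, h2]
  | inr n =>
      have h1 : (2 * n) % 2 = 0 := by omega
      have h2 : (2 * n) / 2 = n := by omega
      simp [lInv, Renaming.ofNameFun, Sum.map, h1, h2]

lemma rInv_rRen_toFun (x : Label) : rInv.toFun (x.map (2 * · + 1) (2 * · + 1)) = some x := by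
  cases x with
  | inl n =>
      have h1 : (2 * n + 1) % 2 = 1 := by omega
      have h2 : (2 * n + 1) / 2 = n := by omega
      simp [rInv, Renaming.ofNameFun, Sum.map, h1, h2]
  | inr n =>
      have h1 : (2 * n + 1) % 2 = 1 := by omega
      have h2 : (2 * n + 1) / 2 = n := by omega
      simp [rInv, Renaming.ofNameFun, Sum.map, h1, h2]

lemma lInv_lRen (a : Act) : lInv.onAction (lRen.onAction a) = a := by
  ext y
  simp only [mem_onAction]
  constructor
  · rintro ⟨z, ⟨x, hx, hz⟩, hy⟩
    rw [lRen_toFun] at hz; cases hz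
    rw [lInv_lRen_toFun] at hy; cases hy; exact hx
  · intro hy
    exact ⟨y.map (2 * ·) (2 * ·), ⟨y, hy, lRen_toFun y⟩, lInv_lRen_toFun y⟩

lemma rInv_rRen (a : Act) : rInv.onAction (rRen.onAction a) = a := by
  ext y
  simp only [mem_onAction]
  constructor
  · rintro ⟨z, ⟨x, hx, hz⟩, hy⟩
    rw [rRen_toFun] at hz; cases hz
    rw [rInv_rRen_toFun] at hy; cases hy; exact hx
  · intro hy
    exact ⟨y.map (2 * · + 1) (2 * · + 1), ⟨y, hy, rRen_toFun y⟩, rInv_rRen_toFun y⟩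

lemma mem_lRen_even {a : Act} {y : Label} (h : y ∈ lRen.onAction a) : y.name % 2 = 0 := by
  obtain ⟨x, _, hx⟩ := mem_onAction.mp h
  rw [lRen_toFun] at hx; cases hx
  rw [name_map]; omega

lemma mem_rRen_odd {a : Act} {y : Label} (h : y ∈ rRen.onAction a) : y.name % 2 = 1 := by
  obtain ⟨x, _, hx⟩ := mem_onAction.mp h
  rw [rRen_toFun] at hx; cases hx
  rw [name_map]; omega

lemma lInv_isSome_iff (x : Label) : (lInv.toFun x).isSome ↔ x.name % 2 = 0 := by
  cases x <;> simp [lInv, Renaming.ofNameFun, Label.name]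

lemma rInv_isSome_iff (x : Label) : (rInv.toFun x).isSome ↔ x.name % 2 = 1 := by
  cases x <;> simp [rInv, Renaming.ofNameFun, Label.name]

lemma lRen_nonempty {a : Act} (h : a.Nonempty) : (lRen.onAction a).Nonempty := by
  obtain ⟨x, hx⟩ := h
  exact ⟨x.map (2 * ·) (2 * ·), mem_onAction.mpr ⟨x, hx, lRen_toFun x⟩⟩

lemma lRen_eq_empty {a : Act} (h : lRen.onAction a = ∅) : a = ∅ := by
  have := lInv_lRen a; rw [h, onAction_empty] at this; exact this.symm

lemma rRen_eq_empty {a : Act} (h : rRen.onAction a = ∅) : a = ∅ := by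
  have := rInv_rRen a; rw [h, onAction_empty] at this; exact this.symm

lemma lRen_inj {a b : Act} (h : lRen.onAction a = lRen.onAction b) : a = b := by
  have := lInv_lRen a; rw [h, lInv_lRen] at this; exact this.symm

lemma rRen_inj {a b : Act} (h : rRen.onAction a = rRen.onAction b) : a = b := by
  have := rInv_rRen a; rw [h, rInv_rRen] at this; exact this.symm

lemma disjoint_parity {u v : Act} (hu : ∀ x ∈ u, x.name % 2 = 0)
    (hv : ∀ x ∈ v, x.name % 2 = 1) : Disjoint u v :=
  Finset.disjoint_left.mpr fun {x} hx hx' => by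
    have := hu x hx; have := hv x hx'; omega

lemma union_parity_eq {u v u' v' : Act}
    (hu : ∀ x ∈ u, x.name % 2 = 0) (hv : ∀ x ∈ v, x.name % 2 = 1)
    (hu' : ∀ x ∈ u', x.name % 2 = 0) (hv' : ∀ x ∈ v', x.name % 2 = 1)
    (h : u ∪ v = u' ∪ v') : u = u' ∧ v = v' := by
  have key : ∀ x : Label, (x ∈ u ∨ x ∈ v) ↔ (x ∈ u' ∨ x ∈ v') := by
    intro x; rw [← Finset.mem_union, ← Finset.mem_union, h]
  constructor
  · ext x
    constructor
    · intro hx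
      rcases (key x).mp (Or.inl hx) with h' | h'
      · exact h'
      · have := hu x hx; have := hv' x h'; omega
    · intro hx
      rcases (key x).mpr (Or.inl hx) with h' | h'
      · exact h'
      · have := hu' x hx; have := hv x h'; omega
  · ext x
    constructor
    · intro hx
      rcases (key x).mp (Or.inr hx) with h' | h'
      · have := hv x hx; have := hu' x h'; omega
      · exact h'
    · intro hx
      rcases (key x).mpr (Or.inr hx) with h' | h'
      · have := hv' x hx; have := hu x h'; omega
      · exact h'

lemma mem_LabL {x : Label} : x ∈ LabL ↔ x.name % 2 = 0 := Iff.rfl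
lemma mem_LabR {x : Label} : x ∈ LabR ↔ x.name % 2 = 1 := Iff.rfl

/-! ### Transitions of the wire -/

lemma step_Iproc_iff {a : Act} {Q : Proc} :
    Step Iproc a Q ↔
      ∃ c : Act, c.Nonempty ∧
        a = lRen.onAction c ∪ rRen.onAction (c.image Label.bar) ∧ Q = Iproc := by
  constructor
  · intro h
    unfold Iproc at h
    cases h with
    | fix h =>
        simp only [Proc.subst, reduceIte] at h
        cases h with
        | sum j hj =>
            obtain ⟨c, hdec, hne⟩ := hj
            refine ⟨c, hne, ?_, rfl⟩
            simp only [hdec, image_bar_onAction]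
  · rintro ⟨c, hne, rfl, rfl⟩
    unfold Iproc
    apply Step.fix
    simp only [Proc.subst, reduceIte]
    have hmem : Encodable.encode c ∈
        {n | ∃ a : Act, (Encodable.decode n : Option Act) = some a ∧ a.Nonempty} :=
      ⟨c, by simp, hne⟩
    convert Step.sum (Encodable.encode c) hmem using 2
    simp only [Encodable.encodek, image_bar_onAction]

/-! ### Step characterization of `⟨P | I⟩` -/

lemma step_lapp_iff {P : Proc} {c : Act} {Q : Proc} :
    Step (lapp P Iproc) c Q ↔ ∃ P', Step P c P' ∧ Q = lapp P' Iproc := by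
  constructor
  · intro h
    unfold lapp at h
    cases h with
    | @rename _ a₀ Y _ h₁ hsome =>
      have hodd : ∀ l ∈ a₀, Label.name l % 2 = 1 :=
        fun l hl => (rInv_isSome_iff l).mp (hsome l hl)
      cases h₁ with
      | @restrict _ _ Z _ h₂ hres =>
        cases h₂ with
        | @parL _ _ P₁ _ hP =>
          cases hP with
          | @rename _ d Pd _ hPd hs =>
            have hd : d = ∅ := by
              apply lRen_eq_empty
              apply Finset.eq_empty_of_forall_notMem
              intro x hx
              have h1 := hodd x hx
              have h2 := mem_lRen_even hx
              omega
            subst hd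
            exact ⟨Pd, by simpa [onAction_empty] using hPd, rfl⟩
        | @parR _ _ _ I' hI =>
          obtain ⟨e, hne, ha₀, _⟩ := step_Iproc_iff.mp hI
          exfalso
          obtain ⟨x, hx⟩ := lRen_nonempty hne
          have hx' : x ∈ a₀ := by rw [ha₀]; exact Finset.mem_union_left _ hx
          have h1 := hodd x hx'
          have h2 := mem_lRen_even hx
          omega
        | @sync _ _ P₁ I' a b c₂ hP hI hab hbc hac =>
          obtain ⟨e, hne, hIa, hI'⟩ := step_Iproc_iff.mp hI
          subst hI'
          generalize hE : a ∪ b = ab at hP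
          cases hP with
          | @rename _ d Pd _ hPd hs =>
            have ha : a = ∅ := by
              apply Finset.eq_empty_of_forall_notMem
              intro x hx
              have h1 := hodd x (Finset.mem_union_left _ hx)
              have h2 : x ∈ lRen.onAction d := by
                rw [← hE]; exact Finset.mem_union_left _ hx
              have h3 := mem_lRen_even h2
              omega
            subst ha
            rw [Finset.empty_union] at hE
            subst hE
            rw [image_bar_onAction] at hIa
            obtain ⟨h5, h6⟩ := union_parity_eq
              (fun x hx => mem_lRen_even hx)
              (fun x hx => hodd x (Finset.mem_union_right _ hx))
              (fun x hx => mem_lRen_even hx)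
              (fun x hx => mem_rRen_odd hx)
              hIa
            have hde : d.image Label.bar = e := lRen_inj h5
            have hc₂ : c₂ = rRen.onAction d := by
              rw [h6, ← hde, image_bar_bar]
            refine ⟨Pd, ?_, rfl⟩
            rw [Finset.empty_union, hc₂, rInv_rRen]
            exact hPd
  · rintro ⟨P', hs, rfl⟩
    rcases Finset.eq_empty_or_nonempty c with rfl | hne
    · have h1 : Step (Proc.rename P lRen) (lRen.onAction ∅) (P'.rename lRen) :=
        Step.rename hs (by simp)
      rw [onAction_empty] at h1
      have h2 := Step.parL (Q := Iproc) h1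
      have h3 := Step.restrict (L := LabL) h2 (by simp)
      have h4 := Step.rename (f := rInv) h3 (by simp)
      rw [onAction_empty] at h4
      exact h4
    · have hP1 : Step (P.rename lRen) (lRen.onAction c) (P'.rename lRen) :=
        Step.rename hs (fun l hl => by rw [lRen_toFun]; rfl)
      have hI1 : Step Iproc ((lRen.onAction c).image Label.bar ∪ rRen.onAction c) Iproc := by
        rw [image_bar_onAction]
        have h := step_Iproc_iff.mpr ⟨c.image Label.bar, hne.image _, rfl, rfl⟩
        rwa [image_bar_bar] at h
      have hsync := Step.sync (a := ∅) (b := lRen.onAction c) (c := rRen.onAction c)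
        (by rw [Finset.empty_union]; exact hP1) hI1 (by simp)
        (disjoint_parity
          (fun x hx => by
            obtain ⟨y, hy, rfl⟩ := Finset.mem_image.mp hx
            rw [name_bar]; exact mem_lRen_even hy)
          (fun x hx => mem_rRen_odd hx))
        (by simp)
      rw [Finset.empty_union] at hsync
      have h3 := Step.restrict (L := LabL) hsync
        (fun l hl => ⟨by
            intro hmem
            have h1 := mem_rRen_odd hl
            have h2 := mem_LabL.mp hmem
            omega,
          by
            intro hmem
            have h1 := mem_rRen_odd hl
            have h2 := mem_LabL.mp hmem
            rw [name_bar] at h2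
            omega⟩)
      have h4 := Step.rename (f := rInv) h3
        (fun l hl => (rInv_isSome_iff l).mpr (mem_rRen_odd hl))
      rw [rInv_rRen] at h4
      exact h4


lemma rRen_nonempty {a : Act} (h : a.Nonempty) : (rRen.onAction a).Nonempty := by
  obtain ⟨x, hx⟩ := h
  exact ⟨x.map (2 * · + 1) (2 * · + 1), mem_onAction.mpr ⟨x, hx, rRen_toFun x⟩⟩

/-! ### Step characterization of `(I | P⟩` -/

lemma step_rapp_iff {P : Proc} {c : Act} {Q : Proc} :
    Step (rapp Iproc P) c Q ↔ ∃ P', Step P c P' ∧ Q = rapp Iproc P' := by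
  constructor
  · intro h
    unfold rapp at h
    cases h with
    | @rename _ a₀ Y _ h₁ hsome =>
      have heven : ∀ l ∈ a₀, Label.name l % 2 = 0 :=
        fun l hl => (lInv_isSome_iff l).mp (hsome l hl)
      cases h₁ with
      | @restrict _ _ Z _ h₂ hres =>
        cases h₂ with
        | @parL _ _ I' _ hI =>
          obtain ⟨e, hne, ha₀, _⟩ := step_Iproc_iff.mp hI
          exfalso
          obtain ⟨x, hx⟩ := rRen_nonempty (hne.image Label.bar)
          have hx' : x ∈ a₀ := by rw [ha₀]; exact Finset.mem_union_right _ hx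
          have h1 := heven x hx'
          have h2 := mem_rRen_odd hx
          omega
        | @parR _ _ _ P₁ hP =>
          cases hP with
          | @rename _ d Pd _ hPd hs =>
            have hd : d = ∅ := by
              apply rRen_eq_empty
              apply Finset.eq_empty_of_forall_notMem
              intro x hx
              have h1 := heven x hx
              have h2 := mem_rRen_odd hx
              omega
            subst hd
            exact ⟨Pd, by simpa [onAction_empty] using hPd, rfl⟩
        | @sync _ _ I' P₁ a b c₂ hI hP hab hbc hac =>
          obtain ⟨e, hne, hIa, hI'⟩ := step_Iproc_iff.mp hI
          subst hI'
          generalize hE : b.image Label.bar ∪ c₂ = ab at hP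
          cases hP with
          | @rename _ d Pd _ hPd hs =>
            have hbodd : ∀ x ∈ b, Label.name x % 2 = 1 := by
              intro x hx
              have hmem : x.bar ∈ rRen.onAction d := by
                rw [← hE]
                exact Finset.mem_union_left _ (Finset.mem_image_of_mem _ hx)
              have := mem_rRen_odd hmem
              rwa [name_bar] at this
            obtain ⟨hae, hbe⟩ := union_parity_eq
              (fun x hx => heven x (Finset.mem_union_left _ hx))
              hbodd
              (fun x hx => mem_lRen_even hx)
              (fun x hx => mem_rRen_odd hx)
              hIa
            have hE' : c₂ ∪ b.image Label.bar = ∅ ∪ rRen.onAction d := by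
              rw [Finset.union_comm, hE, Finset.empty_union]
            obtain ⟨hc₂, hbd⟩ := union_parity_eq
              (fun x hx => heven x (Finset.mem_union_right _ hx))
              (fun x hx => by
                obtain ⟨y, hy, rfl⟩ := Finset.mem_image.mp hx
                rw [name_bar]; exact hbodd y hy)
              (by simp)
              (fun x hx => mem_rRen_odd hx)
              hE'
            have hbd' : rRen.onAction e = rRen.onAction d := by
              rw [← hbd, hbe, image_bar_onAction, image_bar_bar]
            have hed : e = d := rRen_inj hbd'
            refine ⟨Pd, ?_, rfl⟩
            rw [hc₂, Finset.union_empty, hae, lInv_lRen, hed]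
            exact hPd
  · rintro ⟨P', hs, rfl⟩
    rcases Finset.eq_empty_or_nonempty c with rfl | hne
    · have h1 : Step (Proc.rename P rRen) (rRen.onAction ∅) (P'.rename rRen) :=
        Step.rename hs (by simp)
      rw [onAction_empty] at h1
      have h2 := Step.parR (P := Iproc) h1
      have h3 := Step.restrict (L := LabR) h2 (by simp)
      have h4 := Step.rename (f := lInv) h3 (by simp)
      rw [onAction_empty] at h4
      exact h4
    · have hP1 : Step (P.rename rRen) (rRen.onAction c) (P'.rename rRen) :=
        Step.rename hs (fun l hl => by rw [rRen_toFun]; rfl)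
      have hI1 : Step Iproc
          (lRen.onAction c ∪ rRen.onAction (c.image Label.bar)) Iproc :=
        step_Iproc_iff.mpr ⟨c, hne, rfl, rfl⟩
      have hsync := Step.sync (a := lRen.onAction c)
        (b := rRen.onAction (c.image Label.bar)) (c := ∅) hI1
        (by rw [image_bar_onAction, image_bar_bar, Finset.union_empty]; exact hP1)
        (disjoint_parity (fun x hx => mem_lRen_even hx) (fun x hx => mem_rRen_odd hx))
        (by simp)
        (by simp)
      rw [Finset.union_empty] at hsync
      have h3 := Step.restrict (L := LabR) hsync
        (fun l hl => ⟨by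
            intro hmem
            have h1 := mem_lRen_even hl
            have h2 := mem_LabR.mp hmem
            omega,
          by
            intro hmem
            have h1 := mem_lRen_even hl
            have h2 := mem_LabR.mp hmem
            rw [name_bar] at h2
            omega⟩)
      have h4 := Step.rename (f := lInv) h3
        (fun l hl => (lInv_isSome_iff l).mpr (mem_lRen_even hl))
      rw [lInv_lRen] at h4
      exact h4


/-! ### Transfer along a functional strong bisimulation -/

section Transfer

variable {F : Proc → Proc}
  (hF : ∀ P a Q, Step (F P) a Q ↔ ∃ P', Step P a P' ∧ Q = F P')

include hF

lemma tauStar_iff_of_step {P Q : Proc} :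
    TauStar (F P) Q ↔ ∃ P', TauStar P P' ∧ Q = F P' := by
  constructor
  · intro h
    induction h with
    | refl => exact ⟨P, Relation.ReflTransGen.refl, rfl⟩
    | tail _ hbc ih =>
        obtain ⟨P', hP', rfl⟩ := ih
        obtain ⟨P'', hs, rfl⟩ := (hF _ _ _).mp hbc
        exact ⟨P'', hP'.tail hs, rfl⟩
  · rintro ⟨P', h, rfl⟩
    induction h with
    | refl => exact Relation.ReflTransGen.refl
    | tail _ hbc ih => exact ih.tail ((hF _ _ _).mpr ⟨_, hbc, rfl⟩)

lemma obs_iff_of_step {P : Proc} {a : Act} {Q : Proc} :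
    Obs (F P) a Q ↔ ∃ P', Obs P a P' ∧ Q = F P' := by
  constructor
  · rintro ⟨X₁, X₂, h₁, h₂, h₃⟩
    obtain ⟨P₁, hP₁, rfl⟩ := (tauStar_iff_of_step hF).mp h₁
    obtain ⟨P₂, hs, rfl⟩ := (hF _ _ _).mp h₂
    obtain ⟨P₃, h₃', rfl⟩ := (tauStar_iff_of_step hF).mp h₃
    exact ⟨P₃, ⟨P₁, P₂, hP₁, hs, h₃'⟩, rfl⟩
  · rintro ⟨P', ⟨P₁, P₂, h₁, h₂, h₃⟩, rfl⟩
    exact ⟨F P₁, F P₂, (tauStar_iff_of_step hF).mpr ⟨P₁, h₁, rfl⟩,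
      (hF _ _ _).mpr ⟨P₂, h₂, rfl⟩, (tauStar_iff_of_step hF).mpr ⟨P', h₃, rfl⟩⟩

lemma obsSeq_of_step_aux {X : Proc} {s : List Act} {Q : Proc} (h : ObsSeq X s Q) :
    ∀ P, X = F P → ∃ P', ObsSeq P s P' ∧ Q = F P' := by
  induction h with
  | nil ht =>
      rintro P rfl
      obtain ⟨P', h', rfl⟩ := (tauStar_iff_of_step hF).mp ht
      exact ⟨P', ObsSeq.nil h', rfl⟩
  | cons ho _ ih =>
      rintro P rfl
      obtain ⟨P₁, ho', rfl⟩ := (obs_iff_of_step hF).mp ho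
      obtain ⟨P', hs, rfl⟩ := ih P₁ rfl
      exact ⟨P', ObsSeq.cons ho' hs, rfl⟩

lemma obsSeq_map_of_step {P : Proc} {s : List Act} {P' : Proc} (h : ObsSeq P s P') :
    ObsSeq (F P) s (F P') := by
  induction h with
  | nil ht => exact ObsSeq.nil ((tauStar_iff_of_step hF).mpr ⟨_, ht, rfl⟩)
  | cons ho _ ih => exact ObsSeq.cons ((obs_iff_of_step hF).mpr ⟨_, ho, rfl⟩) ih

lemma failEq_of_step (P : Proc) : FailEq (F P) P := by
  show failures (F P) = failures P
  ext ⟨s, X⟩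
  simp only [failures, Set.mem_setOf_eq]
  constructor
  · rintro ⟨h1, h2, Q, hseq, href⟩
    obtain ⟨P', hs, rfl⟩ := obsSeq_of_step_aux hF hseq P rfl
    refine ⟨h1, h2, P', hs, fun a ha hR => ?_⟩
    obtain ⟨R, hR⟩ := hR
    exact href a ha ⟨F R, (obs_iff_of_step hF).mpr ⟨R, hR, rfl⟩⟩
  · rintro ⟨h1, h2, Q, hseq, href⟩
    refine ⟨h1, h2, F Q, obsSeq_map_of_step hF hseq, fun a ha hR => ?_⟩
    obtain ⟨R, hR⟩ := hR
    obtain ⟨R', hR', rfl⟩ := (obs_iff_of_step hF).mp hR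
    exact href a ha ⟨R', hR'⟩

end Transfer


/-- **The identity (wire) process is a two-sided unit for both applications**:
`⟨P | I⟩ ≈_f P ≈_f (I | P⟩` for every process `P`. -/
theorem wire_unit_for_applications (P : Proc) :
    FailEq (lapp P Iproc) P ∧ FailEq (rapp Iproc P) P :=
  ⟨failEq_of_step (F := fun P => lapp P Iproc) (fun _ _ _ => step_lapp_iff) P,
   failEq_of_step (F := fun P => rapp Iproc P) (fun _ _ _ => step_rapp_iff) P⟩
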